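/- Let (Ω, P) be a probability space, f : Ω → [0,1] measurable, t < τ, events Y, Y*, and two events C, C̃ with C̃ = Y* ∪ {f > τ}. Assume P(Yᶜ ∩ Y*) = 0, P(Y*∩ Cᶜ) = 0, and P(Y ∩ Cᶜ) = P(Y ∩ C̃ᶜ). Then P({f ≤ t} ∩ Y ∩ C̃ᶜ) ≥ P({f ≤ t} ∩ Y ∩ Cᶜ), and consequently P({f > t} ∩ Y ∩ Cᶜ) ≥ P({f > t} ∩ Y ∩ C̃ᶜ). -/

import Mathlib

open MeasureTheory

/-- Real-valued probability of an event. -/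
noncomputable def pr {Ω : Type*} [MeasurableSpace Ω] (μ : Measure Ω) (s : Set Ω) : ℝ :=
  (μ s).toReal

/-- Real-valued conditional probability P(A | B). -/
noncomputable def cpr {Ω : Type*} [MeasurableSpace Ω] (μ : Measure Ω) (A B : Set Ω) : ℝ :=
  pr μ (A ∩ B) / pr μ B

theorem stmt_10 {Ω : Type*} [MeasurableSpace Ω] (μ : Measure Ω) [IsProbabilityMeasure μ]
    (f : Ω → ℝ) (hf : Measurable f) (hrange : ∀ ω, f ω ∈ Set.Icc (0 : ℝ) 1)
    (t τ : ℝ) (htτ : t < τ)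
    (Y Ystar C : Set Ω) (hY : MeasurableSet Y) (hYs : MeasurableSet Ystar)
    (hC : MeasurableSet C)
    (Ctil : Set Ω) (hCtil : Ctil = Ystar ∪ {ω | τ < f ω})
    (hcc : μ (Yᶜ ∩ Ystar) = 0)
    (hnoflip : μ (Ystar ∩ Cᶜ) = 0)
    (herr : μ (Y ∩ Cᶜ) = μ (Y ∩ Ctilᶜ)) :
    μ ({ω | f ω ≤ t} ∩ Y ∩ Ctilᶜ) ≥ μ ({ω | f ω ≤ t} ∩ Y ∩ Cᶜ) ∧
      μ ({ω | t < f ω} ∩ Y ∩ Cᶜ) ≥ μ ({ω | t < f ω} ∩ Y ∩ Ctilᶜ) := by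
  set L : Set Ω := {ω | f ω ≤ t} with hL
  -- Claim 1
  have hsub : L ∩ Y ∩ Cᶜ ⊆ (L ∩ Y ∩ Ctilᶜ) ∪ (Ystar ∩ Cᶜ) := by
    intro ω hω
    by_cases hs : ω ∈ Ystar
    · exact Or.inr ⟨hs, hω.2⟩
    · refine Or.inl ⟨hω.1, ?_⟩
      rw [hCtil]
      rintro (h | h)
      · exact hs h
      · exact absurd h (not_lt.mpr (hω.1.1.trans htτ.le))
  have h1 : μ (L ∩ Y ∩ Cᶜ) ≤ μ (L ∩ Y ∩ Ctilᶜ) := by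
    calc μ (L ∩ Y ∩ Cᶜ) ≤ μ ((L ∩ Y ∩ Ctilᶜ) ∪ (Ystar ∩ Cᶜ)) := measure_mono hsub
    _ ≤ μ (L ∩ Y ∩ Ctilᶜ) + μ (Ystar ∩ Cᶜ) := measure_union_le _ _
    _ = μ (L ∩ Y ∩ Ctilᶜ) := by rw [hnoflip, add_zero]
  refine ⟨h1, ?_⟩
  -- Claim 2
  have hLm : MeasurableSet L := measurableSet_le hf measurable_const
  have hCtm : MeasurableSet Ctil := by
    rw [hCtil]; exact hYs.union (measurableSet_lt measurable_const hf)
  have hHL : {ω : Ω | t < f ω} = Lᶜ := by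
    ext ω; simp [hL, not_le]
  have hsplit : ∀ s : Set Ω, μ (L ∩ s) + μ (Lᶜ ∩ s) = μ s := by
    intro s
    rw [Set.inter_comm L s, Set.inter_comm Lᶜ s, ← Set.diff_eq]
    exact measure_inter_add_diff s hLm
  have key : μ (L ∩ (Y ∩ Cᶜ)) + μ (Lᶜ ∩ (Y ∩ Cᶜ)) = μ (L ∩ (Y ∩ Ctilᶜ)) + μ (Lᶜ ∩ (Y ∩ Ctilᶜ)) := by
    rw [hsplit, hsplit, herr]
  rw [hHL]
  have h1' : μ (L ∩ (Y ∩ Cᶜ)) ≤ μ (L ∩ (Y ∩ Ctilᶜ)) := by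
    rw [← Set.inter_assoc, ← Set.inter_assoc]; exact h1
  have hfin : μ (L ∩ (Y ∩ Cᶜ)) ≠ ⊤ := measure_ne_top μ _
  have : μ (L ∩ (Y ∩ Cᶜ)) + μ (Lᶜ ∩ (Y ∩ Ctilᶜ)) ≤ μ (L ∩ (Y ∩ Cᶜ)) + μ (Lᶜ ∩ (Y ∩ Cᶜ)) := by
    rw [key]; exact add_le_add_left h1' _
  have := ENNReal.le_of_add_le_add_left hfin this
  rw [← Set.inter_assoc, ← Set.inter_assoc] at this
  exact this
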